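/- Let μ be a partition of a positive integer d and n a nonnegative integer. For every field F of characteristic zero, dim_F 𝕊_μ(F^n) = dim_ℚ 𝕊_μ(ℚ^n); i.e. the dimension of the Weyl module of an n-dimensional vector space depends only on μ and n, not on the characteristic-zero field. -/

import Mathlib

open scoped TensorProduct

/-- Parts of the partition `μ` listed in (weakly) decreasing order; the canonical Young
tableau of shape `μ` has rows of these lengths, with boxes numbered consecutively along rows. -/
def canonicalParts {d : ℕ} (μ : Nat.Partition d) : List ℕ :=
  (μ.parts.sort (· ≤ ·)).reverse

/-- The row (numbered from `0`) of the box labelled `i` in the canonical Young tableau. -/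
def rowIndex {d : ℕ} (μ : Nat.Partition d) (i : ℕ) : ℕ :=
  ((List.range (canonicalParts μ).length).filter
    fun r => ((canonicalParts μ).take (r + 1)).sum ≤ i).length

/-- The column (numbered from `0`) of the box labelled `i` in the canonical Young tableau. -/
def colIndex {d : ℕ} (μ : Nat.Partition d) (i : ℕ) : ℕ :=
  i - ((canonicalParts μ).take (rowIndex μ i)).sum

/-- The row stabilizer `P_μ ⊆ 𝔖_d` of the canonical Young tableau of shape `μ`. -/
def rowStabilizer {d : ℕ} (μ : Nat.Partition d) : Finset (Equiv.Perm (Fin d)) :=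
  Finset.univ.filter fun σ => ∀ i : Fin d, rowIndex μ (σ i) = rowIndex μ (i : ℕ)

/-- The column stabilizer `Q_μ ⊆ 𝔖_d` of the canonical Young tableau of shape `μ`. -/
def colStabilizer {d : ℕ} (μ : Nat.Partition d) : Finset (Equiv.Perm (Fin d)) :=
  Finset.univ.filter fun σ => ∀ i : Fin d, colIndex μ (σ i) = colIndex μ (i : ℕ)

/-- `a_μ = Σ_{σ ∈ P_μ} σ` in the integral group ring `ℤ[𝔖_d]`. -/
noncomputable def rowSymmetrizer {d : ℕ} (μ : Nat.Partition d) :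
    MonoidAlgebra ℤ (Equiv.Perm (Fin d)) :=
  ∑ σ ∈ rowStabilizer μ, MonoidAlgebra.of ℤ (Equiv.Perm (Fin d)) σ

/-- `b_μ = Σ_{σ ∈ Q_μ} sgn(σ)·σ` in the integral group ring `ℤ[𝔖_d]`. -/
noncomputable def colSymmetrizer {d : ℕ} (μ : Nat.Partition d) :
    MonoidAlgebra ℤ (Equiv.Perm (Fin d)) :=
  ∑ σ ∈ colStabilizer μ, (Equiv.Perm.sign σ : ℤ) • MonoidAlgebra.of ℤ (Equiv.Perm (Fin d)) σ

/-- The Young symmetrizer `c_μ = a_μ · b_μ ∈ ℤ[𝔖_d]`. -/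
noncomputable def youngSymmetrizer {d : ℕ} (μ : Nat.Partition d) :
    MonoidAlgebra ℤ (Equiv.Perm (Fin d)) :=
  rowSymmetrizer μ * colSymmetrizer μ

/-- The place-permutation operator `P_σ` on `M^{⊗d}`, determined by
`P_σ (m₁ ⊗ ⋯ ⊗ m_d) = m_{σ(1)} ⊗ ⋯ ⊗ m_{σ(d)}`. -/
noncomputable def placePerm (R : Type*) [CommRing R] (M : Type*) [AddCommGroup M] [Module R M]
    {d : ℕ} (σ : Equiv.Perm (Fin d)) :
    (⨂[R] _ : Fin d, M) →ₗ[R] ⨂[R] _ : Fin d, M :=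
  PiTensorProduct.lift ((PiTensorProduct.tprod R).domDomCongr σ)

@[simp] theorem placePerm_tprod (R : Type*) [CommRing R] (M : Type*) [AddCommGroup M]
    [Module R M] {d : ℕ} (σ : Equiv.Perm (Fin d)) (m : Fin d → M) :
    placePerm R M σ (PiTensorProduct.tprod R m) = PiTensorProduct.tprod R fun i => m (σ i) :=
  PiTensorProduct.lift.tprod m

/-- The operator on `M^{⊗d}` given by the (right, place-permutation) action of an element
`x` of the group ring `ℤ[𝔖_d]`: the element `σ` acts as `P_σ`, extended `ℤ`-linearly. -/
noncomputable def algAct (R : Type*) [CommRing R] (M : Type*) [AddCommGroup M] [Module R M]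
    {d : ℕ} (x : MonoidAlgebra ℤ (Equiv.Perm (Fin d))) :
    (⨂[R] _ : Fin d, M) →ₗ[R] ⨂[R] _ : Fin d, M :=
  x.coeff.sum fun σ n => n • placePerm R M σ

/-- The Weyl module (Schur functor) `𝕊_μ M`: the image `M^{⊗d}·c_μ` of `M^{⊗d}` under the
action of the Young symmetrizer `c_μ`. -/
noncomputable def weylModule (R : Type*) [CommRing R] (M : Type*) [AddCommGroup M] [Module R M]
    {d : ℕ} (μ : Nat.Partition d) : Submodule R (⨂[R] _ : Fin d, M) :=
  LinearMap.range (algAct R M (youngSymmetrizer μ))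

section AuxRank

open Module LinearMap

/-- `finrank` of the range of a base-changed linear map over fields. -/
lemma aux_finrank_range_baseChange {K L V W : Type*} [Field K] [Field L] [Algebra K L]
    [AddCommGroup V] [Module K V] [AddCommGroup W] [Module K W]
    (f : V →ₗ[K] W) :
    Module.finrank L (LinearMap.range (f.baseChange L))
      = Module.finrank K (LinearMap.range f) := by
  have h2 : f.baseChange L
      = ((LinearMap.range f).subtype.baseChange L) ∘ₗ (f.rangeRestrict.baseChange L) := by
    rw [← LinearMap.baseChange_comp]
    congr 1
  have hsurj : Function.Surjective (f.rangeRestrict.baseChange L) := by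
    rw [LinearMap.baseChange_eq_ltensor]
    exact LinearMap.lTensor_surjective _ f.surjective_rangeRestrict
  have hinj : Function.Injective ((LinearMap.range f).subtype.baseChange L) := by
    rw [LinearMap.baseChange_eq_ltensor]
    exact Module.Flat.lTensor_preserves_injective_linearMap _ (Submodule.injective_subtype _)
  have hr : LinearMap.range (f.baseChange L)
      = LinearMap.range ((LinearMap.range f).subtype.baseChange L) := by
    rw [h2, LinearMap.range_comp_of_range_eq_top _ (LinearMap.range_eq_top.mpr hsurj)]
  rw [hr, ← LinearEquiv.finrank_eq
    (LinearEquiv.ofInjective ((LinearMap.range f).subtype.baseChange L) hinj)]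
  exact Module.finrank_baseChange (S := K) (M' := LinearMap.range f) (R := L)

/-- The rank of a matrix over a field is unchanged under a field embedding. -/
lemma aux_rank_map_algebraMap {m n : Type*} [Fintype m] [Fintype n] [DecidableEq n]
    [DecidableEq m] {K L : Type*} [Field K] [Field L] [Algebra K L] (A : Matrix m n K) :
    (A.map (algebraMap K L)).rank = A.rank := by
  classical
  set b₁ := Pi.basisFun K n
  set b₂ := Pi.basisFun K m
  set f := Matrix.toLin b₁ b₂ A with hf
  have hA : LinearMap.toMatrix b₁ b₂ f = A := LinearMap.toMatrix_toLin b₁ b₂ A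
  have h1 : A.rank = Module.finrank K (LinearMap.range f) :=
    Matrix.rank_eq_finrank_range_toLin A b₂ b₁
  have h2 : A.map (algebraMap K L)
      = LinearMap.toMatrix (Algebra.TensorProduct.basis L b₁) (Algebra.TensorProduct.basis L b₂)
        (f.baseChange L) := by
    rw [LinearMap.toMatrix_baseChange, hA]
  have h3 : (A.map (algebraMap K L)).rank
      = Module.finrank L (LinearMap.range (f.baseChange L)) := by
    rw [Matrix.rank_eq_finrank_range_toLin (A.map (algebraMap K L))
      (Algebra.TensorProduct.basis L b₂) (Algebra.TensorProduct.basis L b₁), h2,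
      Matrix.toLin_toMatrix]
  rw [h3, h1, aux_finrank_range_baseChange]

end AuxRank
section TensorBasis

open PiTensorProduct

variable (R : Type*) [CommRing R] (n d : ℕ)

/-- Evaluation of a `d`-fold tensor power of `Rⁿ` as a function on multi-indices. -/
noncomputable def tensorToFunc : (⨂[R] _ : Fin d, (Fin n → R)) →ₗ[R] ((Fin d → Fin n) → R) :=
  PiTensorProduct.lift <| MultilinearMap.pi fun v =>
    (MultilinearMap.mkPiAlgebra R (Fin d) R).compLinearMap fun i => LinearMap.proj (v i)

@[simp] lemma tensorToFunc_tprod (m : Fin d → (Fin n → R)) (v : Fin d → Fin n) :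
    tensorToFunc R n d (PiTensorProduct.tprod R m) v = ∏ i, m i (v i) := by
  simp [tensorToFunc]

/-- Inverse of `tensorToFunc`. -/
noncomputable def funcToTensor : ((Fin d → Fin n) → R) →ₗ[R] (⨂[R] _ : Fin d, (Fin n → R)) :=
  ∑ v : Fin d → Fin n,
    (LinearMap.proj v).smulRight (PiTensorProduct.tprod R fun i => Pi.single (v i) 1)

lemma funcToTensor_apply (f : (Fin d → Fin n) → R) :
    funcToTensor R n d f
      = ∑ v : Fin d → Fin n, f v • PiTensorProduct.tprod R fun i => Pi.single (v i) 1 := by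
  simp [funcToTensor]

lemma prod_single_eq (v w : Fin d → Fin n) :
    (∏ i, (Pi.single (M := fun _ : Fin n => R) (v i) 1) (w i)) = if v = w then 1 else 0 := by
  simp only [Pi.single_apply]
  rw [Finset.prod_boole]
  simp [funext_iff, eq_comm]

lemma right_inv_tf : (tensorToFunc R n d).comp (funcToTensor R n d) = LinearMap.id := by
  refine LinearMap.ext fun f => ?_
  funext w
  simp only [LinearMap.comp_apply, funcToTensor_apply, map_sum, map_smul, LinearMap.id_apply]
  simp only [Finset.sum_apply, Pi.smul_apply, tensorToFunc_tprod, prod_single_eq, smul_eq_mul,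
    mul_ite, mul_one, mul_zero]
  simp

lemma left_inv_tf : (funcToTensor R n d).comp (tensorToFunc R n d) = LinearMap.id := by
  refine LinearMap.ext fun x => ?_
  induction x using PiTensorProduct.induction_on with
  | add x y hx hy => simp only [map_add, LinearMap.comp_apply, LinearMap.id_apply] at hx hy ⊢; rw [hx, hy]
  | smul_tprod r m =>
  simp only [LinearMap.comp_apply, map_smul, LinearMap.id_apply]
  congr 1
  rw [funcToTensor_apply]
  simp only [tensorToFunc_tprod]
  have hm : m = fun i => ∑ j : Fin n, m i j • Pi.single (M := fun _ : Fin n => R) j 1 := by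
    funext i x
    simp [Pi.single_apply, Finset.sum_apply]
  conv_rhs => rw [hm, MultilinearMap.map_sum]
  refine Finset.sum_congr rfl fun v _ => ?_
  rw [MultilinearMap.map_smul_univ]

/-- The tensor power as a function space. -/
noncomputable def tensorEquivFunc : (⨂[R] _ : Fin d, (Fin n → R)) ≃ₗ[R] ((Fin d → Fin n) → R) :=
  LinearEquiv.ofLinear (tensorToFunc R n d) (funcToTensor R n d) (right_inv_tf R n d)
    (left_inv_tf R n d)

/-- Basis of the tensor power indexed by multi-indices. -/
noncomputable def tensorBasis : Module.Basis (Fin d → Fin n) R (⨂[R] _ : Fin d, (Fin n → R)) :=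
  Module.Basis.ofEquivFun (tensorEquivFunc R n d)

lemma tensorBasis_apply (v : Fin d → Fin n) :
    tensorBasis R n d v = PiTensorProduct.tprod R fun i => Pi.single (v i) 1 := by
  apply (tensorEquivFunc R n d).injective
  funext w
  have h1 : tensorEquivFunc R n d (tensorBasis R n d v) w
      = (tensorBasis R n d).repr (tensorBasis R n d v) w :=
    (Module.Basis.ofEquivFun_repr_apply (tensorEquivFunc R n d) (tensorBasis R n d v) w).symm
  rw [h1, Module.Basis.repr_self]
  have h2 : tensorEquivFunc R n d (PiTensorProduct.tprod R fun i => Pi.single (v i) 1)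
      = tensorToFunc R n d (PiTensorProduct.tprod R fun i => Pi.single (v i) 1) := rfl
  rw [h2, tensorToFunc_tprod, prod_single_eq]
  simp [Finsupp.single_apply]


end TensorBasis


section Entries

open PiTensorProduct

variable (R : Type*) [CommRing R] (n d : ℕ)

lemma placePerm_basis (σ : Equiv.Perm (Fin d)) (w : Fin d → Fin n) :
    placePerm R (Fin n → R) σ (tensorBasis R n d w) = tensorBasis R n d (w ∘ σ) := by
  rw [tensorBasis_apply, tensorBasis_apply, placePerm_tprod]
  rfl

/-- The matrix over `ℤ` of the place-permutation action of a group-ring element, in the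
standard basis of the tensor power; it is independent of the base ring. -/
noncomputable def intMatrix (c : MonoidAlgebra ℤ (Equiv.Perm (Fin d))) :
    Matrix (Fin d → Fin n) (Fin d → Fin n) ℤ :=
  fun v w => c.coeff.sum fun σ z => if w ∘ σ = v then z else 0

lemma toMatrix_algAct (c : MonoidAlgebra ℤ (Equiv.Perm (Fin d))) :
    LinearMap.toMatrix (tensorBasis R n d) (tensorBasis R n d) (algAct R (Fin n → R) c)
      = (intMatrix n d c).map (Int.cast : ℤ → R) := by
  ext v w
  rw [LinearMap.toMatrix_apply]
  have h1 : algAct R (Fin n → R) c (tensorBasis R n d w)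
      = ∑ σ ∈ c.coeff.support, c.coeff σ • tensorBasis R n d (w ∘ σ) := by
    rw [algAct, Finsupp.sum, LinearMap.sum_apply]
    refine Finset.sum_congr rfl fun σ _ => ?_
    have : (c.coeff σ • placePerm R (Fin n → R) σ) (tensorBasis R n d w)
        = c.coeff σ • placePerm R (Fin n → R) σ (tensorBasis R n d w) := rfl
    rw [this, placePerm_basis]
  rw [h1, map_sum, Finsupp.finset_sum_apply]
  simp only [map_zsmul, Module.Basis.repr_self, Finsupp.smul_apply, Finsupp.single_apply]
  simp only [Matrix.map_apply, intMatrix, Finsupp.sum, Int.cast_sum]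
  refine Finset.sum_congr rfl fun σ _ => ?_
  by_cases h : w ∘ σ = v <;> simp [h]

lemma finrank_weylModule_eq_rank {d : ℕ} (μ : Nat.Partition d) (n : ℕ)
    (K : Type*) [Field K] :
    Module.finrank K (weylModule K (Fin n → K) μ)
      = ((intMatrix n d (youngSymmetrizer μ)).map (Int.cast : ℤ → K)).rank := by
  classical
  have h := Matrix.rank_eq_finrank_range_toLin
    (LinearMap.toMatrix (tensorBasis K n d) (tensorBasis K n d)
      (algAct K (Fin n → K) (youngSymmetrizer μ))) (tensorBasis K n d) (tensorBasis K n d)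
  rw [Matrix.toLin_toMatrix] at h
  rw [weylModule, ← toMatrix_algAct, ← h]

end Entries

/-- For every field `F` of characteristic zero,
`dim_F 𝕊_μ(Fⁿ) = dim_ℚ 𝕊_μ(ℚⁿ)`: the dimension of the Weyl module of an `n`-dimensional
vector space depends only on `μ` and `n`, not on the characteristic-zero field. -/
theorem weylModule_finrank_eq (d : ℕ) (hd : 0 < d) (μ : Nat.Partition d) (n : ℕ)
    (F : Type*) [Field F] [CharZero F] :
    Module.finrank F (weylModule F (Fin n → F) μ)
      = Module.finrank ℚ (weylModule ℚ (Fin n → ℚ) μ) := by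
  classical
  rw [finrank_weylModule_eq_rank μ n F, finrank_weylModule_eq_rank μ n ℚ]
  have hcast : (Int.cast : ℤ → F) = (algebraMap ℚ F) ∘ (Int.cast : ℤ → ℚ) := by
    funext z; simp
  rw [hcast, ← Matrix.map_map, aux_rank_map_algebraMap]
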